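/- Let T be a hub-tree decomposition of a directed graph H⃗, let B be a node of T with children B₁,...,B_l, and fix a homomorphism φ_B from H⃗(B) to G⃗. Then the set of homomorphisms from H⃗(down(B)) to G⃗ that respect φ_B is in bijection with the product over i = 1,...,l of the sets of homomorphisms from H⃗(down(B_i)) to G⃗ that respect φ_B. Consequently, ext(H⃗(down(B)), G⃗, φ_B) = ∏_{i=1}^{l} ext(H⃗(down(B_i)), G⃗, φ_B). -/

import Mathlib

variable {VH VG ι : Type*}

/-- The set of vertices reachable from `v` by a directed path. -/
def Reach (D : VH → VH → Prop) (v : VH) : Set VH := {w | Relation.ReflTransGen D v w}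

/-- The set of vertices reachable from some vertex of `A`. -/
def ReachS (D : VH → VH → Prop) (A : Set VH) : Set VH := ⋃ s ∈ A, Reach D s

/-- `S` is a hubset of the directed graph `D`. -/
def IsHubset (D : VH → VH → Prop) (S : Set VH) : Prop :=
  (∀ s ∈ S, ∀ s' ∈ S, s ≠ s' → ¬ Relation.TransGen D s s') ∧
  (∀ v, v ∉ S → ∃ s ∈ S, v ∈ Reach D s)

/-- A hub-tree decomposition of a directed graph `D` with hubset `S`, with nodes
indexed by `ι`. -/
structure HubTreeDecomp (D : VH → VH → Prop) (S : Set VH) (ι : Type*) where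
  T : SimpleGraph ι
  tree : T.IsTree
  bag : ι → Set VH
  bag_sub : ∀ i, bag i ⊆ S
  bag_cover : ∀ s ∈ S, ∃ i, s ∈ bag i
  decomp : ∀ (b b₁ b₂ : ι) (p : T.Walk b₁ b₂), p.IsPath → b ∈ p.support →
    ReachS D (bag b₁) ∩ ReachS D (bag b₂) ⊆ ReachS D (bag b)

/-- `i` lies in the subtree rooted at... i.e. `i` is on the unique path from the root `r`
to `j` (so `j` is a descendant of `i` in the tree rooted at `r`). -/
def InSubtree (T : SimpleGraph ι) (r i j : ι) : Prop :=
  ∀ p : T.Walk r j, p.IsPath → i ∈ p.support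

/-- The union of the reachability sets of the bags in the subtree of `B`
(with respect to the root `r`): the vertex set of `H⃗(down(B))`. -/
def downReach (D : VH → VH → Prop) {S : Set VH}
    (𝒯 : HubTreeDecomp D S ι) (r B : ι) : Set VH :=
  ⋃ j ∈ {j | InSubtree 𝒯.T r B j}, ReachS D (𝒯.bag j)

/-- The homomorphisms from the subgraph of `D` induced on `U` to `Dg` that respect the
partial homomorphism `φB` defined on `A` (they agree with `φB` wherever both are
defined). -/
def HomExt (D : VH → VH → Prop) (Dg : VG → VG → Prop) (U A : Set VH) (φB : A → VG) :
    Type _ :=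
  {φ : U → VG //
    (∀ u v : U, D (u : VH) (v : VH) → Dg (φ u) (φ v)) ∧
    ∀ (u : U) (h : (u : VH) ∈ A), φ u = φB ⟨u, h⟩}

section Aux

open SimpleGraph

attribute [local instance] Classical.decEq Classical.propDecidable

lemma reachS_closed {D : VH → VH → Prop} {A : Set VH} {x y : VH}
    (hx : x ∈ ReachS D A) (hxy : D x y) : y ∈ ReachS D A := by
  obtain ⟨s, hs, hxs⟩ := Set.mem_iUnion₂.1 hx
  exact Set.mem_iUnion₂.2 ⟨s, hs, Relation.ReflTransGen.tail hxs hxy⟩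

lemma downReach_closed {D : VH → VH → Prop} {S : Set VH} {𝒯 : HubTreeDecomp D S ι}
    {r B : ι} {x y : VH} (hx : x ∈ downReach D 𝒯 r B) (hxy : D x y) :
    y ∈ downReach D 𝒯 r B := by
  obtain ⟨j, hj, hxj⟩ := Set.mem_iUnion₂.1 hx
  exact Set.mem_iUnion₂.2 ⟨j, hj, reachS_closed hxj hxy⟩

lemma tree_path_eq {T : SimpleGraph ι} (ht : T.IsTree) {a b : ι}
    {p q : T.Walk a b} (hp : p.IsPath) (hq : q.IsPath) : p = q :=
  (ht.existsUnique_path a b).unique hp hq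

lemma exists_tree_path {T : SimpleGraph ι} (ht : T.IsTree) (a b : ι) :
    ∃ p : T.Walk a b, p.IsPath :=
  (ht.existsUnique_path a b).exists

lemma insubtree_of {T : SimpleGraph ι} (ht : T.IsTree) {r i j : ι}
    (p : T.Walk r j) (hp : p.IsPath) (hi : i ∈ p.support) : InSubtree T r i j := by
  intro q hq
  rwa [tree_path_eq ht hq hp]

lemma takeUntil_dropUntil_eq {T : SimpleGraph ι} {a b c : ι} {p : T.Walk a b}
    (hp : p.IsPath) (hc : c ∈ p.support) {x : ι}
    (h1 : x ∈ (p.takeUntil c hc).support) (h2 : x ∈ (p.dropUntil c hc).support) :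
    x = c := by
  have hnd : p.support.Nodup := hp.support_nodup
  rw [← SimpleGraph.Walk.take_spec p hc, SimpleGraph.Walk.support_append,
    List.nodup_append] at hnd
  by_contra hne
  have h2' : x ∈ (p.dropUntil c hc).support.tail := by
    have := (p.dropUntil c hc).support_eq_cons
    rw [this] at h2
    rcases List.mem_cons.1 h2 with h2 | h2
    · exact absurd h2 hne
    · exact h2
  exact hnd.2.2 x h1 x h2' rfl

lemma adj_path_eq {T : SimpleGraph ι} (ht : T.IsTree) {a b : ι} (h : T.Adj a b)
    {p : T.Walk a b} (hp : p.IsPath) : p = SimpleGraph.Walk.cons h SimpleGraph.Walk.nil :=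
  tree_path_eq ht hp (by simp [h.ne])

lemma insubtree_trans {T : SimpleGraph ι} {r B c j : ι}
    (hBc : InSubtree T r B c) (hcj : InSubtree T r c j) : InSubtree T r B j := by
  intro p hp
  have hc : c ∈ p.support := hcj p hp
  have hB : B ∈ (p.takeUntil c hc).support := hBc _ (hp.takeUntil hc)
  exact SimpleGraph.Walk.support_takeUntil_subset _ _ hB

lemma exists_child {T : SimpleGraph ι} (ht : T.IsTree) {r B j : ι}
    (hBj : InSubtree T r B j) (hne : j ≠ B) :
    ∃ c, T.Adj B c ∧ InSubtree T r B c ∧ InSubtree T r c j := by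
  obtain ⟨p, hp⟩ := exists_tree_path ht r j
  have hB : B ∈ p.support := hBj p hp
  obtain ⟨c, hadj, d', hd⟩ :
      ∃ c, ∃ h : T.Adj B c, ∃ d' : T.Walk c j,
        p.dropUntil B hB = SimpleGraph.Walk.cons h d' := by
    cases hdd : p.dropUntil B hB with
    | nil => exact absurd rfl hne
    | cons h d' => exact ⟨_, h, d', rfl⟩
  have hcd : c ∈ (p.dropUntil B hB).support := by
    rw [hd]; simp
  have hcp : c ∈ p.support := SimpleGraph.Walk.support_dropUntil_subset _ _ hcd
  have hct : c ∉ (p.takeUntil B hB).support := by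
    intro hmem
    exact hadj.ne' (takeUntil_dropUntil_eq hp hB hmem hcd)
  refine ⟨c, hadj, ?_, insubtree_of ht p hp hcp⟩
  have hq : ((p.takeUntil B hB).concat hadj).IsPath := by
    rw [SimpleGraph.Walk.isPath_def, SimpleGraph.Walk.support_concat,
      List.nodup_append]
    refine ⟨(hp.takeUntil hB).support_nodup, List.nodup_singleton c, ?_⟩
    intro y hy z hyc hyz
    rw [List.mem_singleton] at hyc
    subst hyc
    exact hct (hyz ▸ hy)
  refine insubtree_of ht _ hq ?_
  rw [SimpleGraph.Walk.support_concat]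
  exact List.mem_append_left _ (SimpleGraph.Walk.end_mem_support _)

lemma child_drop {T : SimpleGraph ι} (ht : T.IsTree) {r B c j : ι}
    (hadj : T.Adj B c) (hBc : InSubtree T r B c) (hcj : InSubtree T r c j)
    {p : T.Walk r j} (hp : p.IsPath) (hB : B ∈ p.support) :
    ∃ d : T.Walk c j, p.dropUntil B hB = SimpleGraph.Walk.cons hadj d := by
  have hcp : c ∈ p.support := hcj p hp
  have hcd : c ∈ (p.dropUntil B hB).support := by
    by_contra hc
    have hcT : c ∈ (p.takeUntil B hB).support := by
      have := p.take_spec hB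
      rw [← this, SimpleGraph.Walk.mem_support_append_iff] at hcp
      tauto
    -- then B is on the path r→c which is a prefix of takeUntil B, but B appears only at end
    have htp : (p.takeUntil B hB).IsPath := hp.takeUntil hB
    have hBq : B ∈ ((p.takeUntil B hB).takeUntil c hcT).support :=
      hBc _ (htp.takeUntil hcT)
    have hBd : B ∈ ((p.takeUntil B hB).dropUntil c hcT).support :=
      SimpleGraph.Walk.end_mem_support _
    exact hadj.ne (takeUntil_dropUntil_eq htp hcT hBq hBd)
  have hdp : (p.dropUntil B hB).IsPath := hp.dropUntil hB
  have hseg : (p.dropUntil B hB).takeUntil c hcd = SimpleGraph.Walk.cons hadj SimpleGraph.Walk.nil :=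
    adj_path_eq ht hadj (hdp.takeUntil hcd)
  refine ⟨(p.dropUntil B hB).dropUntil c hcd, ?_⟩
  conv_lhs => rw [← (p.dropUntil B hB).take_spec hcd]
  rw [hseg]
  simp

lemma separation {T : SimpleGraph ι} (ht : T.IsTree) {r B c c' j j' : ι}
    (hadj : T.Adj B c) (hBc : InSubtree T r B c)
    (hadj' : T.Adj B c') (hBc' : InSubtree T r B c') (hcc' : c ≠ c')
    (hcj : InSubtree T r c j) (hc'j' : InSubtree T r c' j') :
    ∃ q : T.Walk j j', q.IsPath ∧ B ∈ q.support := by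
  obtain ⟨p, hp⟩ := exists_tree_path ht r j
  obtain ⟨p', hp'⟩ := exists_tree_path ht r j'
  have hB : B ∈ p.support := insubtree_trans hBc hcj p hp
  have hB' : B ∈ p'.support := insubtree_trans hBc' hc'j' p' hp'
  obtain ⟨d, hd⟩ := child_drop ht hadj hBc hcj hp hB
  obtain ⟨d', hd'⟩ := child_drop ht hadj' hBc' hc'j' hp' hB'
  have he : (p.dropUntil B hB).IsPath := hp.dropUntil hB
  have he' : (p'.dropUntil B hB').IsPath := hp'.dropUntil hB'
  have hBd : B ∉ d.support := by
    have := he.support_nodup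
    rw [hd] at this
    simpa using (List.nodup_cons.1 (by simpa using this)).1
  have hBd' : B ∉ d'.support := by
    have := he'.support_nodup
    rw [hd'] at this
    simpa using (List.nodup_cons.1 (by simpa using this)).1
  have hdisj : ∀ x, x ∈ (p.dropUntil B hB).support → x ∈ (p'.dropUntil B hB').support →
      x = B := by
    intro x hx hx'
    by_contra hxB
    have hxd : x ∈ d.support := by
      rw [hd] at hx; rcases (by simpa using hx) with h | h
      · exact absurd h hxB
      · exact h
    have hxd' : x ∈ d'.support := by
      rw [hd'] at hx'; rcases (by simpa using hx') with h | h
      · exact absurd h hxB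
      · exact h
    -- build a walk c → c' avoiding B
    set w : T.Walk c c' :=
      (d.takeUntil x hxd).append (d'.takeUntil x hxd').reverse with hw
    have hBw : B ∉ w.support := by
      rw [hw]
      intro hmem
      rw [SimpleGraph.Walk.mem_support_append_iff] at hmem
      rcases hmem with h | h
      · exact hBd (SimpleGraph.Walk.support_takeUntil_subset _ _ h)
      · rw [SimpleGraph.Walk.support_reverse, List.mem_reverse] at h
        exact hBd' (SimpleGraph.Walk.support_takeUntil_subset _ _ h)
    have hpath : (SimpleGraph.Walk.cons hadj.symm
        (SimpleGraph.Walk.cons hadj' SimpleGraph.Walk.nil) : T.Walk c c').IsPath := by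
      rw [SimpleGraph.Walk.isPath_def]
      simp [hadj.ne', hadj'.ne, hcc']
    have := tree_path_eq ht (w.toPath.2) hpath
    have hBtp : B ∈ (w.toPath : T.Walk c c').support := by
      rw [this]; simp
    exact hBw (SimpleGraph.Walk.support_toPath_subset w hBtp)
  refine ⟨(p.dropUntil B hB).reverse.append (p'.dropUntil B hB'), ?_, ?_⟩
  · rw [SimpleGraph.Walk.isPath_def, SimpleGraph.Walk.support_append,
      List.nodup_append, SimpleGraph.Walk.support_reverse]
    refine ⟨List.nodup_reverse.2 he.support_nodup, ?_, ?_⟩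
    · have := he'.support_nodup
      rw [(p'.dropUntil B hB').support_eq_cons] at this
      exact (List.nodup_cons.1 this).2
    · intro x hx y hx' hxy
      subst hxy
      rw [List.mem_reverse] at hx
      have hx'' : x ∈ (p'.dropUntil B hB').support := by
        rw [(p'.dropUntil B hB').support_eq_cons]
        exact List.mem_cons_of_mem _ hx'
      have hxB := hdisj x hx hx''
      have hB'nd := he'.support_nodup
      rw [(p'.dropUntil B hB').support_eq_cons] at hB'nd
      exact (List.nodup_cons.1 hB'nd).1 (hxB ▸ hx')
  · rw [SimpleGraph.Walk.mem_support_append_iff]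
    left
    rw [SimpleGraph.Walk.support_reverse, List.mem_reverse]
    exact SimpleGraph.Walk.start_mem_support _

lemma down_inter {D : VH → VH → Prop} {S : Set VH} (𝒯 : HubTreeDecomp D S ι)
    {r B c c' : ι} (hadj : 𝒯.T.Adj B c) (hBc : InSubtree 𝒯.T r B c)
    (hadj' : 𝒯.T.Adj B c') (hBc' : InSubtree 𝒯.T r B c') (hcc' : c ≠ c') {x : VH}
    (hx : x ∈ downReach D 𝒯 r c) (hx' : x ∈ downReach D 𝒯 r c') :
    x ∈ ReachS D (𝒯.bag B) := by
  obtain ⟨j, hj, hxj⟩ := Set.mem_iUnion₂.1 hx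
  obtain ⟨j', hj', hxj'⟩ := Set.mem_iUnion₂.1 hx'
  obtain ⟨q, hq, hBq⟩ := separation 𝒯.tree hadj hBc hadj' hBc' hcc' hj hj'
  exact 𝒯.decomp B j j' q hq hBq ⟨hxj, hxj'⟩

lemma down_sub {D : VH → VH → Prop} {S : Set VH} (𝒯 : HubTreeDecomp D S ι)
    {r B c : ι} (hBc : InSubtree 𝒯.T r B c) :
    downReach D 𝒯 r c ⊆ downReach D 𝒯 r B := by
  intro x hx
  obtain ⟨j, hj, hxj⟩ := Set.mem_iUnion₂.1 hx
  exact Set.mem_iUnion₂.2 ⟨j, insubtree_trans hBc hj, hxj⟩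

lemma mem_down_self {D : VH → VH → Prop} {S : Set VH} (𝒯 : HubTreeDecomp D S ι)
    {r B : ι} {x : VH} (hx : x ∈ ReachS D (𝒯.bag B)) : x ∈ downReach D 𝒯 r B :=
  Set.mem_iUnion₂.2 ⟨B, fun _ _ => SimpleGraph.Walk.end_mem_support _, hx⟩

lemma down_split {D : VH → VH → Prop} {S : Set VH} (𝒯 : HubTreeDecomp D S ι)
    {r B : ι} {x : VH} (hx : x ∈ downReach D 𝒯 r B)
    (hxB : x ∉ ReachS D (𝒯.bag B)) :
    ∃ c : {c : ι // 𝒯.T.Adj B c ∧ InSubtree 𝒯.T r B c}, x ∈ downReach D 𝒯 r (c : ι) := by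
  obtain ⟨j, hj, hxj⟩ := Set.mem_iUnion₂.1 hx
  have hne : j ≠ B := by rintro rfl; exact hxB hxj
  obtain ⟨c, hadj, hBc, hcj⟩ := exists_child 𝒯.tree hj hne
  exact ⟨⟨c, hadj, hBc⟩, Set.mem_iUnion₂.2 ⟨j, hcj, hxj⟩⟩

noncomputable def backFun (D : VH → VH → Prop) (Dg : VG → VG → Prop) {S : Set VH}
    (𝒯 : HubTreeDecomp D S ι) (r B : ι) (φB : ↥(ReachS D (𝒯.bag B)) → VG)
    (Fam : ∀ c : {c : ι // 𝒯.T.Adj B c ∧ InSubtree 𝒯.T r B c},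
      HomExt D Dg (downReach D 𝒯 r (c : ι)) (ReachS D (𝒯.bag B)) φB)
    (x : ↥(downReach D 𝒯 r B)) : VG :=
  if h : (x : VH) ∈ ReachS D (𝒯.bag B) then φB ⟨x, h⟩
  else (Fam (down_split 𝒯 x.2 h).choose).1 ⟨x, (down_split 𝒯 x.2 h).choose_spec⟩

lemma backFun_pos {D : VH → VH → Prop} {Dg : VG → VG → Prop} {S : Set VH}
    {𝒯 : HubTreeDecomp D S ι} {r B : ι} {φB : ↥(ReachS D (𝒯.bag B)) → VG}
    (Fam : ∀ c : {c : ι // 𝒯.T.Adj B c ∧ InSubtree 𝒯.T r B c},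
      HomExt D Dg (downReach D 𝒯 r (c : ι)) (ReachS D (𝒯.bag B)) φB)
    (x : ↥(downReach D 𝒯 r B)) (h : (x : VH) ∈ ReachS D (𝒯.bag B)) :
    backFun D Dg 𝒯 r B φB Fam x = φB ⟨x, h⟩ := dif_pos h

lemma backFun_eq {D : VH → VH → Prop} {Dg : VG → VG → Prop} {S : Set VH}
    {𝒯 : HubTreeDecomp D S ι} {r B : ι} {φB : ↥(ReachS D (𝒯.bag B)) → VG}
    (Fam : ∀ c : {c : ι // 𝒯.T.Adj B c ∧ InSubtree 𝒯.T r B c},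
      HomExt D Dg (downReach D 𝒯 r (c : ι)) (ReachS D (𝒯.bag B)) φB)
    (x : ↥(downReach D 𝒯 r B)) (c : {c : ι // 𝒯.T.Adj B c ∧ InSubtree 𝒯.T r B c})
    (hc : (x : VH) ∈ downReach D 𝒯 r (c : ι)) :
    backFun D Dg 𝒯 r B φB Fam x = (Fam c).1 ⟨x, hc⟩ := by
  by_cases h : (x : VH) ∈ ReachS D (𝒯.bag B)
  · rw [backFun_pos Fam x h, ((Fam c).2.2 ⟨x, hc⟩ h)]
  · unfold backFun
    rw [dif_neg h]
    have hx₀ := (down_split 𝒯 x.2 h).choose_spec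
    by_cases hcc : (down_split 𝒯 x.2 h).choose = c
    · subst hcc; rfl
    · exact absurd (down_inter 𝒯 (down_split 𝒯 x.2 h).choose.2.1
        (down_split 𝒯 x.2 h).choose.2.2 c.2.1 c.2.2
        (fun he => hcc (Subtype.ext he)) hx₀ hc) h

end Aux

/-- let `T` be a hub-tree decomposition (rooted at `r`) of `D`, `B` a node,
and `φB` a homomorphism from `H⃗(B)` to `Dg`.  The homomorphisms from `H⃗(down(B))` to `Dg`
respecting `φB` are in bijection with the product, over the children `c` of `B`, of the
homomorphisms from `H⃗(down(c))` to `Dg` respecting `φB`; consequently the corresponding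
counts `ext` multiply. -/
theorem stmt16 [Finite VH] [Finite VG] [Finite ι]
    (D : VH → VH → Prop) (Dg : VG → VG → Prop) (S : Set VH) (hS : IsHubset D S)
    (𝒯 : HubTreeDecomp D S ι) (r B : ι)
    (φB : ↥(ReachS D (𝒯.bag B)) → VG)
    (hφB : ∀ u v : ↥(ReachS D (𝒯.bag B)), D (u : VH) (v : VH) → Dg (φB u) (φB v)) :
    Nonempty
      (HomExt D Dg (downReach D 𝒯 r B) (ReachS D (𝒯.bag B)) φB ≃
        ∀ c : {c : ι // 𝒯.T.Adj B c ∧ InSubtree 𝒯.T r B c},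
          HomExt D Dg (downReach D 𝒯 r (c : ι)) (ReachS D (𝒯.bag B)) φB) ∧
    Nat.card (HomExt D Dg (downReach D 𝒯 r B) (ReachS D (𝒯.bag B)) φB) =
      ∏ᶠ c : {c : ι // 𝒯.T.Adj B c ∧ InSubtree 𝒯.T r B c},
        Nat.card (HomExt D Dg (downReach D 𝒯 r (c : ι)) (ReachS D (𝒯.bag B)) φB) := by
  classical
  have hsub : ∀ c : {c : ι // 𝒯.T.Adj B c ∧ InSubtree 𝒯.T r B c},
      downReach D 𝒯 r (c : ι) ⊆ downReach D 𝒯 r B := fun c => down_sub 𝒯 c.2.2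
  let fwd : HomExt D Dg (downReach D 𝒯 r B) (ReachS D (𝒯.bag B)) φB →
      ∀ c : {c : ι // 𝒯.T.Adj B c ∧ InSubtree 𝒯.T r B c},
        HomExt D Dg (downReach D 𝒯 r (c : ι)) (ReachS D (𝒯.bag B)) φB :=
    fun φ c => ⟨fun x => φ.1 ⟨x, hsub c x.2⟩,
      fun u v huv => φ.2.1 ⟨u, hsub c u.2⟩ ⟨v, hsub c v.2⟩ huv,
      fun u h => φ.2.2 ⟨u, hsub c u.2⟩ h⟩
  have hom_back : ∀ Fam, ∀ u v : ↥(downReach D 𝒯 r B), D (u : VH) (v : VH) →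
      Dg (backFun D Dg 𝒯 r B φB Fam u) (backFun D Dg 𝒯 r B φB Fam v) := by
    intro Fam u v huv
    by_cases h : (u : VH) ∈ ReachS D (𝒯.bag B)
    · have hv : (v : VH) ∈ ReachS D (𝒯.bag B) := reachS_closed h huv
      rw [backFun_pos Fam u h, backFun_pos Fam v hv]
      exact hφB ⟨u, h⟩ ⟨v, hv⟩ huv
    · obtain ⟨c, hc⟩ := down_split 𝒯 u.2 h
      have hv : (v : VH) ∈ downReach D 𝒯 r (c : ι) := downReach_closed hc huv
      rw [backFun_eq Fam u c hc, backFun_eq Fam v c hv]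
      exact (Fam c).2.1 ⟨u, hc⟩ ⟨v, hv⟩ huv
  let e : HomExt D Dg (downReach D 𝒯 r B) (ReachS D (𝒯.bag B)) φB ≃
      ∀ c : {c : ι // 𝒯.T.Adj B c ∧ InSubtree 𝒯.T r B c},
        HomExt D Dg (downReach D 𝒯 r (c : ι)) (ReachS D (𝒯.bag B)) φB :=
    { toFun := fwd
      invFun := fun Fam => ⟨backFun D Dg 𝒯 r B φB Fam, hom_back Fam,
        fun u h => backFun_pos Fam u h⟩
      left_inv := by
        intro φ
        apply Subtype.ext
        funext x
        show backFun D Dg 𝒯 r B φB (fwd φ) x = φ.1 x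
        by_cases h : (x : VH) ∈ ReachS D (𝒯.bag B)
        · rw [backFun_pos (fwd φ) x h, ← φ.2.2 x h]
        · obtain ⟨c, hc⟩ := down_split 𝒯 x.2 h
          rw [backFun_eq (fwd φ) x c hc]
      right_inv := by
        intro Fam
        funext c
        apply Subtype.ext
        funext x
        show backFun D Dg 𝒯 r B φB Fam ⟨x, hsub c x.2⟩ = (Fam c).1 x
        rw [backFun_eq Fam ⟨x, hsub c x.2⟩ c x.2] }
  refine ⟨⟨e⟩, ?_⟩
  have : Fintype {c : ι // 𝒯.T.Adj B c ∧ InSubtree 𝒯.T r B c} := Fintype.ofFinite _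
  rw [Nat.card_congr e, Nat.card_pi, finprod_eq_prod_of_fintype]
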